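/- Let b : [0,T] → 𝒮³_dev satisfy the ODE b'(t) = c ε'(t) − d |ε'(t)| b(t) pointwise, where ε : [0,T] → 𝒮³_dev is absolutely continuous, c, d > 0, and |b(0)| ≤ c/d. Then |b(t)| ≤ c/d for all t ∈ [0,T]. -/

import Mathlib

open Set

/-- `L∞`-boundedness of the backstress (pointwise content of Lemma 4.2): the
Armstrong–Frederick evolution `b' = c ε' − d |ε'| b` preserves the ball of radius `c/d`. -/
theorem backstress_bound {E : Type*} [NormedAddCommGroup E] [InnerProductSpace ℝ E]
    (T c d : ℝ) (hT : 0 ≤ T) (hc : 0 < c) (hd : 0 < d)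
    (b ε ε' : ℝ → E)
    (hε : ∀ t ∈ Icc 0 T, HasDerivAt ε (ε' t) t)
    (hb : ∀ t ∈ Icc 0 T, HasDerivAt b (c • ε' t - (d * ‖ε' t‖) • b t) t)
    (h0 : ‖b 0‖ ≤ c / d) :
    ∀ t ∈ Icc 0 T, ‖b t‖ ≤ c / d := by
  set f : ℝ → ℝ := fun t => ‖b t‖ ^ 2 with hf_def
  set f' : ℝ → ℝ := fun t =>
    2 * inner ℝ (c • ε' t - (d * ‖ε' t‖) • b t) (b t) with hf'_def
  have hfderiv : ∀ t ∈ Icc 0 T, HasDerivAt f (f' t) t := by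
    intro t ht
    have h1 : HasDerivAt (fun s => inner ℝ (b s) (b s) : ℝ → ℝ)
        (inner ℝ (b t) (c • ε' t - (d * ‖ε' t‖) • b t)
          + inner ℝ (c • ε' t - (d * ‖ε' t‖) • b t) (b t)) t :=
      (hb t ht).inner ℝ (hb t ht)
    have h2 : (fun s => (inner ℝ (b s) (b s) : ℝ)) = f := by
      funext s; simp [hf_def, real_inner_self_eq_norm_sq]
    rw [h2] at h1
    convert h1 using 1
    rw [hf'_def]
    simp only [real_inner_comm (b t)]
    ring
  -- key pointwise bound when ‖b t‖ ≥ c/d : f' t ≤ 0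
  have key : ∀ t ∈ Icc 0 T, c / d ≤ ‖b t‖ → f' t ≤ 0 := by
    intro t ht hbt
    have h1 : (inner ℝ (c • ε' t - (d * ‖ε' t‖) • b t) (b t) : ℝ)
        = c * inner ℝ (ε' t) (b t) - d * ‖ε' t‖ * (‖b t‖ ^ 2) := by
      rw [inner_sub_left, real_inner_smul_left, real_inner_smul_left,
        real_inner_self_eq_norm_sq]
    have h2 : (inner ℝ (ε' t) (b t) : ℝ) ≤ ‖ε' t‖ * ‖b t‖ := real_inner_le_norm _ _
    have h3 : c ≤ d * ‖b t‖ := by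
      rw [div_le_iff₀ hd] at hbt; linarith [hbt]
    have h4 : c * (‖ε' t‖ * ‖b t‖) ≤ d * ‖ε' t‖ * ‖b t‖ ^ 2 := by
      have := mul_le_mul_of_nonneg_right h3
        (mul_nonneg (norm_nonneg (ε' t)) (norm_nonneg (b t)))
      nlinarith [norm_nonneg (ε' t), norm_nonneg (b t)]
    have h5 : c * (inner ℝ (ε' t) (b t) : ℝ) ≤ c * (‖ε' t‖ * ‖b t‖) :=
      mul_le_mul_of_nonneg_left h2 hc.le
    rw [hf'_def]
    simp only
    rw [h1]
    nlinarith
  -- for every r > 0, f t ≤ (c/d)^2 + r * (t + 1) on [0, T]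
  have main : ∀ r : ℝ, 0 < r → ∀ t ∈ Icc 0 T, f t ≤ (c / d) ^ 2 + r * (t + 1) := by
    intro r hr
    have hfc : ContinuousOn f (Icc 0 T) := fun t ht =>
      ((hfderiv t ht).continuousAt).continuousWithinAt
    refine image_le_of_deriv_right_lt_deriv_boundary hfc
      (fun t ht => ((hfderiv t (Ico_subset_Icc_self ht)).hasDerivWithinAt))
      ?_ (B' := fun _ => r)
      (fun t => by
        simpa using (((hasDerivAt_id t).add_const 1).const_mul r).const_add
          ((c / d) ^ 2)) ?_
    · have : 0 ≤ f 0 := sq_nonneg _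
      have h0' : f 0 ≤ (c / d) ^ 2 := by
        have := pow_le_pow_left₀ (norm_nonneg (b 0)) h0 2
        simpa [hf_def] using this
      nlinarith
    · intro t ht hcontact
      have htT : t ∈ Icc 0 T := Ico_subset_Icc_self ht
      have hge : c / d ≤ ‖b t‖ := by
        by_contra h
        push_neg at h
        have : f t < (c / d) ^ 2 := by
          have := pow_lt_pow_left₀ h (norm_nonneg (b t)) two_ne_zero
          simpa [hf_def] using this
        have hpos : 0 < r * (t + 1) := by
          have : (0:ℝ) < t + 1 := by linarith [ht.1]
          positivity
        rw [hcontact] at this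
        linarith
      calc f' t ≤ 0 := key t htT hge
        _ < r := hr
  -- conclude by letting r → 0
  intro t ht
  have hft : f t ≤ (c / d) ^ 2 := by
    refine le_of_forall_pos_le_add fun δ hδ => ?_
    have ht1 : (0:ℝ) < t + 1 := by linarith [ht.1]
    have := main (δ / (t + 1)) (by positivity) t ht
    calc f t ≤ (c / d) ^ 2 + δ / (t + 1) * (t + 1) := this
      _ = (c / d) ^ 2 + δ := by field_simp
  have : ‖b t‖ ^ 2 ≤ (c / d) ^ 2 := hft
  have hcd : 0 ≤ c / d := by positivity
  nlinarith [norm_nonneg (b t)]
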